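/- Let P be an n-polytope and Σ a special m-simplex of P with vertex set {v₀,…,v_m}. Then for every affine hyperplane H ⊂ ℝ^n containing Σ, there exist vertices of P not in Σ lying strictly on both sides of H. -/

import Mathlib

set_option maxHeartbeats 1000000


open Set Module

/-- A (possibly empty or improper) face of `P`: the set of maximizers of a linear
functional over `P` (at level `α`, an upper bound of the functional on `P`). -/
def IsFace {E : Type*} [AddCommGroup E] [Module ℝ E] (P F : Set E) : Prop :=
  ∃ (c : E →ₗ[ℝ] ℝ) (α : ℝ), (∀ x ∈ P, c x ≤ α) ∧ F = {x ∈ P | c x = α}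

/-- A facet of the polytope `P`: a nonempty proper face of dimension `dim P - 1`. -/
def IsFacet {E : Type*} [AddCommGroup E] [Module ℝ E] (P F : Set E) : Prop :=
  IsFace P F ∧ F ≠ P ∧ F.Nonempty ∧
    Module.finrank ℝ (vectorSpan ℝ F) + 1 = Module.finrank ℝ (vectorSpan ℝ P)

variable {n : ℕ}

private abbrev EE (n : ℕ) := Fin n → ℝ

private lemma hull_le (V : Finset (EE n)) (c : EE n →ₗ[ℝ] ℝ) (α : ℝ)
    (hle : ∀ u ∈ V, c u ≤ α) : ∀ x ∈ convexHull ℝ (V : Set (EE n)), c x ≤ α := by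
  intro x hx
  have : convexHull ℝ (V : Set (EE n)) ⊆ {w | c w ≤ α} :=
    convexHull_min (fun u hu => hle u (by exact_mod_cast hu)) (convex_halfSpace_le c.isLinear α)
  exact this hx

private lemma vs_hull (s : Set (EE n)) :
    vectorSpan ℝ (convexHull ℝ s) = vectorSpan ℝ s := by
  rw [← direction_affineSpan, affineSpan_convexHull,
    direction_affineSpan]

private lemma face_eq (V : Finset (EE n)) (c : EE n →ₗ[ℝ] ℝ) (α : ℝ)
    (hle : ∀ u ∈ V, c u ≤ α) :
    {x ∈ convexHull ℝ (V : Set (EE n)) | c x = α}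
      = convexHull ℝ ((V.filter (fun u => c u = α) : Finset (EE n)) : Set (EE n)) := by
  apply Set.Subset.antisymm
  · rintro x ⟨hx, hcx⟩
    rw [Finset.convexHull_eq] at hx
    obtain ⟨w, hw0, hw1, hwx⟩ := hx
    have hsupp : ∀ u ∈ V, w u ≠ 0 → c u = α := by
      by_contra h
      push_neg at h
      obtain ⟨u₀, hu₀V, hw₀, hc₀⟩ := h
      have hlt : c u₀ < α := lt_of_le_of_ne (hle u₀ hu₀V) hc₀
      have hpos : 0 < w u₀ := lt_of_le_of_ne (hw0 u₀ hu₀V) (Ne.symm hw₀)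
      have hcx' : c x = ∑ u ∈ V, w u * c u := by
        rw [← hwx, Finset.centerMass_eq_of_sum_1 _ _ hw1]
        simp [map_sum, map_smul, smul_eq_mul]
      have hlt2 : ∑ u ∈ V, w u * c u < ∑ u ∈ V, w u * α := by
        apply Finset.sum_lt_sum
        · intro u hu; exact mul_le_mul_of_nonneg_left (hle u hu) (hw0 u hu)
        · exact ⟨u₀, hu₀V, by nlinarith⟩
      rw [← Finset.sum_mul, hw1, one_mul] at hlt2
      rw [hcx'] at hcx
      linarith
    rw [Finset.convexHull_eq]
    refine ⟨w, fun u hu => hw0 u (Finset.mem_filter.mp hu).1, ?_, ?_⟩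
    · rw [Finset.sum_filter, ← hw1]
      apply Finset.sum_congr rfl
      intro u hu
      by_cases h : c u = α
      · simp [h]
      · have : w u = 0 := by_contra fun hw => h (hsupp u hu hw)
        simp [h, this]
    · have hsum : ∑ u ∈ V.filter (fun u => c u = α), w u = 1 := by
        rw [Finset.sum_filter, ← hw1]
        apply Finset.sum_congr rfl
        intro u hu
        by_cases h : c u = α
        · simp [h]
        · have : w u = 0 := by_contra fun hw => h (hsupp u hu hw)
          simp [h, this]
      rw [Finset.centerMass_eq_of_sum_1 _ _ hsum, ← hwx,
        Finset.centerMass_eq_of_sum_1 _ _ hw1]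
      rw [Finset.sum_filter]
      apply Finset.sum_congr rfl
      intro u hu
      by_cases h : c u = α
      · simp [h]
      · have : w u = 0 := by_contra fun hw => h (hsupp u hu hw)
        simp [h, this]
  · intro x hx
    constructor
    · exact convexHull_mono (Finset.coe_subset.mpr (Finset.filter_subset _ _)) hx
    · have h1 : c x ≤ α := hull_le _ c α (fun u hu => hle u (Finset.mem_filter.mp hu).1) x hx
      have h2 : α ≤ c x := by
        have : convexHull ℝ ((V.filter (fun u => c u = α) : Finset (EE n)) : Set (EE n))
            ⊆ {w | α ≤ c w} :=
          convexHull_min (fun u hu => by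
            have := Finset.mem_filter.mp (by exact_mod_cast hu : u ∈ V.filter (fun u => c u = α))
            simp [this.2]) (convex_halfSpace_ge c.isLinear α)
        exact this hx
      linarith

private lemma vectorSpan_le_ker {S : Set (EE n)} (c : EE n →ₗ[ℝ] ℝ) (α : ℝ)
    (h : ∀ u ∈ S, c u = α) : vectorSpan ℝ S ≤ LinearMap.ker c := by
  rw [vectorSpan_def, Submodule.span_le]
  rintro x ⟨a, ha, b, hb, rfl⟩
  simp [LinearMap.mem_ker, vsub_eq_sub, map_sub, h a ha, h b hb]

private lemma finrank_ker_lt (c : EE n →ₗ[ℝ] ℝ) (hc : c ≠ 0) :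
    finrank ℝ (LinearMap.ker c) < n := by
  have h : LinearMap.ker c ≠ ⊤ := fun h => hc (LinearMap.ker_eq_top.mp h)
  have := Submodule.finrank_lt (K := ℝ) (V := EE n) h
  simpa using this

private lemma exists_rotation_functional (W : Subspace ℝ (EE n)) (c : EE n →ₗ[ℝ] ℝ)
    (hW : finrank ℝ W + 2 ≤ n) :
    ∃ d : EE n →ₗ[ℝ] ℝ, (∀ x ∈ W, d x = 0) ∧ d ∉ Submodule.span ℝ {c} := by
  have h1 : finrank ℝ W + finrank ℝ W.dualAnnihilator = n := by
    have h1 : finrank ℝ ((EE n) ⧸ W) = finrank ℝ W.dualAnnihilator :=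
      LinearEquiv.finrank_eq (W.quotEquivAnnihilator)
    have h2 := Submodule.finrank_quotient_add_finrank W
    rw [h1] at h2
    simp only [Module.finrank_pi, Fintype.card_fin] at h2
    omega
  have h2 : finrank ℝ (Submodule.span ℝ {c}) < finrank ℝ W.dualAnnihilator := by
    have hle : finrank ℝ (Submodule.span ℝ ({c} : Set (EE n →ₗ[ℝ] ℝ))) ≤ 1 := by
      by_cases hc0 : c = 0
      · subst hc0
        rw [Submodule.span_zero_singleton]
        simp
      · rw [finrank_span_singleton hc0]
    omega
  have h3 : ¬ (W.dualAnnihilator ≤ Submodule.span ℝ {c}) := by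
    intro hle
    exact absurd (Submodule.finrank_mono hle) (not_le.mpr h2)
  rw [SetLike.not_le_iff_exists] at h3
  obtain ⟨d, hd1, hd2⟩ := h3
  exact ⟨d, fun x hx => (Submodule.mem_dualAnnihilator d).mp hd1 x hx, hd2⟩

private lemma exists_facet (V : Finset (EE n))
    (hfull : finrank ℝ (vectorSpan ℝ (V : Set (EE n))) = n) :
    ∀ (k : ℕ) (c : EE n →ₗ[ℝ] ℝ) (α : ℝ), (V.filter (fun u => c u ≠ α)).card ≤ k →
      c ≠ 0 → (∀ u ∈ V, c u ≤ α) → (∃ u ∈ V, c u = α) →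
      ∃ F, IsFacet (convexHull ℝ (V : Set (EE n))) F ∧ ∀ u ∈ V, c u = α → u ∈ F := by
  intro k
  induction k with
  | zero =>
    intro c α hcard hc hle hex
    exfalso
    have hall : ∀ u ∈ V, c u = α := by
      intro u hu
      by_contra h
      have hmem : u ∈ V.filter (fun u => c u ≠ α) := Finset.mem_filter.mpr ⟨hu, h⟩
      have := Finset.card_pos.mpr ⟨u, hmem⟩
      omega
    have h1 : vectorSpan ℝ (V : Set (EE n)) ≤ LinearMap.ker c :=
      vectorSpan_le_ker c α (fun u hu => hall u (Finset.mem_coe.mp hu))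
    have := lt_of_le_of_lt (Submodule.finrank_mono h1) (finrank_ker_lt c hc)
    omega
  | succ k ih =>
    intro c α hcard hc hle hex
    set Vα := V.filter (fun u => c u = α) with hVα
    set W := vectorSpan ℝ (Vα : Set (EE n)) with hW
    have hWker : W ≤ LinearMap.ker c :=
      vectorSpan_le_ker c α (fun u hu => (Finset.mem_filter.mp (Finset.mem_coe.mp hu)).2)
    have hWlt : finrank ℝ W < n :=
      lt_of_le_of_lt (Submodule.finrank_mono hWker) (finrank_ker_lt c hc)
    obtain ⟨p, hpV, hpα⟩ := hex
    have hpVα : p ∈ Vα := Finset.mem_filter.mpr ⟨hpV, hpα⟩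
    by_cases hfacet : finrank ℝ W + 1 = n
    · -- this face is already a facet
      refine ⟨{x ∈ convexHull ℝ (V : Set (EE n)) | c x = α},
        ⟨⟨c, α, hull_le V c α hle, rfl⟩, ?_, ?_, ?_⟩, ?_⟩
      · intro hFP
        have h1 : finrank ℝ (vectorSpan ℝ {x ∈ convexHull ℝ (V : Set (EE n)) | c x = α})
            = finrank ℝ W := by
          rw [face_eq V c α hle, hW, vs_hull]
        rw [hFP, vs_hull, hfull] at h1
        omega
      · exact ⟨p, subset_convexHull ℝ _ (Finset.mem_coe.mpr hpV), hpα⟩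
      · rw [face_eq V c α hle, vs_hull, vs_hull, hfull, ← hVα, ← hW, hfacet]
      · intro u hu hcu
        exact ⟨subset_convexHull ℝ _ (Finset.mem_coe.mpr hu), hcu⟩
    · -- rotate the hyperplane
      have h2 : finrank ℝ W + 2 ≤ n := by omega
      obtain ⟨d₀, hd₀W, hd₀c⟩ := exists_rotation_functional W c h2
      have hexu : ∀ (d : EE n →ₗ[ℝ] ℝ), d ∉ Submodule.span ℝ {c} →
          ∃ u ∈ V, d u ≠ d p := by
        intro d hdc
        by_contra h
        push_neg at h
        have h1 : vectorSpan ℝ (V : Set (EE n)) ≤ LinearMap.ker d :=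
          vectorSpan_le_ker d (d p) (fun u hu => h u (Finset.mem_coe.mp hu))
        have hd0 : d ≠ 0 := fun h0 => hdc (h0 ▸ Submodule.zero_mem _)
        have := lt_of_le_of_lt (Submodule.finrank_mono h1) (finrank_ker_lt d hd0)
        omega
      have main : ∀ (d : EE n →ₗ[ℝ] ℝ), (∀ x ∈ W, d x = 0) →
          d ∉ Submodule.span ℝ {c} → (∃ u ∈ V, d p < d u) →
          ∃ F, IsFacet (convexHull ℝ (V : Set (EE n))) F ∧ ∀ u ∈ V, c u = α → u ∈ F := by
        rintro d hdW hdc ⟨u₁, hu₁V, hu₁⟩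
        have hdVα : ∀ u ∈ Vα, d u = d p := by
          intro u hu
          have hmem : u - p ∈ W := by
            have := vsub_mem_vectorSpan ℝ (Finset.mem_coe.mpr hu) (Finset.mem_coe.mpr hpVα)
            simpa [vsub_eq_sub] using this
          have h0 := hdW _ hmem
          simp only [map_sub] at h0
          linarith
        set S := V.filter (fun u => d p < d u) with hS
        have hSne : S.Nonempty := ⟨u₁, Finset.mem_filter.mpr ⟨hu₁V, hu₁⟩⟩
        obtain ⟨u₀, hu₀S, hu₀min⟩ :=
          S.exists_min_image (fun u => (α - c u) / (d u - d p)) hSne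
        obtain ⟨hu₀V, hdu₀⟩ := Finset.mem_filter.mp hu₀S
        have hu₀α : c u₀ < α := by
          refine lt_of_le_of_ne (hle u₀ hu₀V) ?_
          intro hcu₀
          have : u₀ ∈ Vα := Finset.mem_filter.mpr ⟨hu₀V, hcu₀⟩
          exact absurd (hdVα u₀ this) (by linarith)
        set t := (α - c u₀) / (d u₀ - d p) with ht'
        have ht : 0 < t := div_pos (by linarith) (by linarith)
        set c' := c + t • d with hc'def
        set α' := α + t * d p with hα'def
        have hc'app : ∀ x, c' x = c x + t * d x := by
          intro x
          simp [hc'def]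
        have hc' : c' ≠ 0 := by
          intro h0
          apply hdc
          rw [Submodule.mem_span_singleton]
          refine ⟨-t⁻¹, ?_⟩
          have h1 : c + t • d = 0 := h0
          have h2 : t • d = -c := (neg_eq_of_add_eq_zero_right h1).symm
          have h3 : d = t⁻¹ • (t • d) := by
            rw [smul_smul, inv_mul_cancel₀ (ne_of_gt ht), one_smul]
          rw [h3, h2]
          ext x
          simp [mul_comm]
        have hVαeq : ∀ u ∈ Vα, c' u = α' := by
          intro u hu
          rw [hc'app, (Finset.mem_filter.mp hu).2, hdVα u hu, hα'def]
        have hle' : ∀ u ∈ V, c' u ≤ α' := by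
          intro u hu
          rw [hc'app, hα'def]
          by_cases hSu : d p < d u
          · have hmin := hu₀min u (Finset.mem_filter.mpr ⟨hu, hSu⟩)
            have h3 : t * (d u - d p) ≤ α - c u := by
              have := (le_div_iff₀ (by linarith : (0:ℝ) < d u - d p)).mp hmin
              linarith [this]
            nlinarith
          · push_neg at hSu
            have h4 : t * d u ≤ t * d p := mul_le_mul_of_nonneg_left hSu ht.le
            have := hle u hu
            linarith
        have hu₀eq : c' u₀ = α' := by
          rw [hc'app, hα'def]
          have : t * (d u₀ - d p) = α - c u₀ := by
            rw [ht', div_mul_cancel₀ _ (by linarith : d u₀ - d p ≠ 0)]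
          nlinarith
        have hsubset : V.filter (fun u => c' u ≠ α') ⊂ V.filter (fun u => c u ≠ α) := by
          constructor
          · intro u hu
            obtain ⟨huV, hne'⟩ := Finset.mem_filter.mp hu
            refine Finset.mem_filter.mpr ⟨huV, ?_⟩
            intro hcu
            exact hne' (hVαeq u (Finset.mem_filter.mpr ⟨huV, hcu⟩))
          · intro hsub
            have h5 : u₀ ∈ V.filter (fun u => c u ≠ α) :=
              Finset.mem_filter.mpr ⟨hu₀V, ne_of_lt hu₀α⟩
            have h6 := Finset.mem_filter.mp (hsub h5)
            exact h6.2 hu₀eq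
        have hcard' : (V.filter (fun u => c' u ≠ α')).card ≤ k := by
          have := Finset.card_lt_card hsubset
          omega
        obtain ⟨F, hF, hFmem⟩ := ih c' α' hcard' hc' hle'
          ⟨p, hpV, hVαeq p hpVα⟩
        exact ⟨F, hF, fun u hu hcu =>
          hFmem u hu (hVαeq u (Finset.mem_filter.mpr ⟨hu, hcu⟩))⟩
      obtain ⟨u₁, hu₁V, hu₁⟩ := hexu d₀ hd₀c
      rcases lt_or_gt_of_ne hu₁ with hlt | hgt
      · refine main (-d₀) (fun x hx => by simp [hd₀W x hx]) ?_ ⟨u₁, hu₁V, by simpa using hlt⟩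
        intro hmem
        apply hd₀c
        have := Submodule.neg_mem _ hmem
        simpa using this
      · exact main d₀ hd₀W hd₀c ⟨u₁, hu₁V, hgt⟩

/-- If $\Sigma$ is a special $m$-simplex of the $n$-polytope $P$, then every affine
hyperplane containing $\Sigma$ has vertices of $P$ outside $\Sigma$ strictly on both
sides. -/
theorem special_simplex_hyperplane_separates {n m : ℕ}
    (V : Finset (Fin n → ℝ)) (P : Set (Fin n → ℝ))
    (hP : P = convexHull ℝ (V : Set (Fin n → ℝ)))
    (hfull : Module.finrank ℝ (vectorSpan ℝ P) = n)
    (v : Fin (m + 1) → (Fin n → ℝ)) (hv : AffineIndependent ℝ v)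
    (hvV : ∀ i, v i ∈ V) (hm : m + 1 ≤ n)
    (hspec : ∀ F : Set (Fin n → ℝ), IsFacet P F → ∃! i, v i ∉ F) :
    ∀ (c : (Fin n → ℝ) →ₗ[ℝ] ℝ) (α : ℝ), c ≠ 0 → (∀ i, c (v i) = α) →
      (∃ u ∈ V, u ∉ Set.range v ∧ α < c u) ∧
      (∃ u ∈ V, u ∉ Set.range v ∧ c u < α) := by
  intro c α hc hvon
  subst hP
  have hfullV : finrank ℝ (vectorSpan ℝ (V : Set (Fin n → ℝ))) = n := by
    rw [← vs_hull]; exact hfull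
  constructor
  · by_contra h
    push_neg at h
    have hle : ∀ u ∈ V, c u ≤ α := by
      intro u hu
      by_cases hr : u ∈ Set.range v
      · obtain ⟨i, rfl⟩ := hr
        rw [hvon i]
      · exact h u hu hr
    obtain ⟨F, hF, hFmem⟩ := exists_facet V hfullV
      ((V.filter (fun u => c u ≠ α)).card) c α le_rfl hc hle ⟨v 0, hvV 0, hvon 0⟩
    obtain ⟨i, hi, -⟩ := hspec F hF
    exact hi (hFmem (v i) (hvV i) (hvon i))
  · by_contra h
    push_neg at h
    have hle : ∀ u ∈ V, (-c) u ≤ -α := by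
      intro u hu
      by_cases hr : u ∈ Set.range v
      · obtain ⟨i, rfl⟩ := hr
        simp [hvon i]
      · simpa using h u hu hr
    obtain ⟨F, hF, hFmem⟩ := exists_facet V hfullV
      ((V.filter (fun u => (-c) u ≠ -α)).card) (-c) (-α) le_rfl (neg_ne_zero.mpr hc) hle
      ⟨v 0, hvV 0, by simp [hvon 0]⟩
    obtain ⟨i, hi, -⟩ := hspec F hF
    exact hi (hFmem (v i) (hvV i) (by simp [hvon i]))
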